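/- Let p be a prime and n a positive integer coprime to p. There exists α in the algebraic closure of 𝔽_p such that (α+λ)^n = 1 for all λ ∈ 𝔽_p if and only if there exists a nonzero element c in the algebraic closure of 𝔽_p such that the polynomial x^p - x - c divides x^n - 1. -/

import Mathlib

open Polynomial

theorem key (p : ℕ) [Fact p.Prime] :
    (X ^ p - X : (ZMod p)[X]) = ∏ a : ZMod p, (X - C a) := by
  have hp1 : 1 < p := Nat.Prime.one_lt (Fact.out : p.Prime)
  have h1 : (X ^ p - X : (ZMod p)[X]).Monic := by
    apply monic_X_pow_sub
    simpa using hp1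
  have h2 := FiniteField.roots_X_pow_card_sub_X (ZMod p)
  rw [ZMod.card] at h2
  have h3 := prod_multiset_X_sub_C_of_monic_of_roots_card_eq h1 ?_
  · rw [h2] at h3
    rw [← h3]
    rfl
  · rw [h2, FiniteField.X_pow_card_sub_X_natDegree_eq _ hp1]
    show Finset.univ.card = p
    simp [ZMod.card]

theorem key2 (p : ℕ) [Fact p.Prime] :
    (X ^ p - X : (AlgebraicClosure (ZMod p))[X]) =
      ∏ a : ZMod p, (X - C (algebraMap (ZMod p) (AlgebraicClosure (ZMod p)) a)) := by
  have := congrArg (Polynomial.map (algebraMap (ZMod p) (AlgebraicClosure (ZMod p)))) (key p)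
  simpa [Polynomial.map_prod] using this

theorem key3 (p : ℕ) [Fact p.Prime] (α : AlgebraicClosure (ZMod p)) :
    (X ^ p - X - C (α ^ p - α) : (AlgebraicClosure (ZMod p))[X]) =
      ∏ a : ZMod p, (X - C (α + algebraMap (ZMod p) (AlgebraicClosure (ZMod p)) a)) := by
  have := congrArg (fun q : (AlgebraicClosure (ZMod p))[X] => q.comp (X - C α)) (key2 p)
  simp only [prod_comp, sub_comp, pow_comp, X_comp, C_comp] at this
  have hc : CharP (AlgebraicClosure (ZMod p)) p := inferInstance
  rw [sub_pow_char] at this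
  calc (X ^ p - X - C (α ^ p - α) : (AlgebraicClosure (ZMod p))[X])
      = X ^ p - C α ^ p - (X - C α) := by rw [C_sub, C_pow]; ring
    _ = ∏ a : ZMod p, (X - C α - C (algebraMap (ZMod p) (AlgebraicClosure (ZMod p)) a)) := this
    _ = _ := by apply Finset.prod_congr rfl; intro a _; rw [C_add]; ring

theorem stmt_0 (p : ℕ) [Fact p.Prime] (n : ℕ) (hn : 0 < n) (hcop : Nat.Coprime n p) :
    (∃ α : AlgebraicClosure (ZMod p),
        ∀ lam : ZMod p, (α + algebraMap (ZMod p) (AlgebraicClosure (ZMod p)) lam) ^ n = 1) ↔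
      ∃ c : AlgebraicClosure (ZMod p), c ≠ 0 ∧
        (X ^ p - X - C c : Polynomial (AlgebraicClosure (ZMod p))) ∣ X ^ n - 1 := by
  set K := AlgebraicClosure (ZMod p)
  set f := algebraMap (ZMod p) K
  have hp1 : 1 < p := Nat.Prime.one_lt (Fact.out : p.Prime)
  constructor
  · rintro ⟨α, hα⟩
    refine ⟨α ^ p - α, ?_, ?_⟩
    · intro h0
      have hroot : α ^ p - α = 0 := h0
      have : eval α (∏ a : ZMod p, (X - C (f a))) = 0 := by
        rw [← key2 p]; simpa using hroot
      rw [eval_prod] at this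
      obtain ⟨a, _, ha⟩ := Finset.prod_eq_zero_iff.mp this
      simp only [eval_sub, eval_X, eval_C, sub_eq_zero] at ha
      have := hα (-a)
      rw [ha, ← map_add] at this
      rw [add_neg_cancel, map_zero, zero_pow hn.ne'] at this
      exact one_ne_zero this.symm
    · rw [key3 p α]
      apply Fintype.prod_dvd_of_coprime
      · apply Polynomial.pairwise_coprime_X_sub_C
        intro a b hab
        exact (RingHom.injective f) (add_left_cancel hab)
      · intro a
        rw [dvd_iff_isRoot]
        simp [IsRoot, sub_eq_zero, hα a]
        exact hα a
  · rintro ⟨c, hc0, hdvd⟩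
    have hdeg : (X ^ p - X - C c : K[X]).degree ≠ 0 := by
      have h1 : (X + C c : K[X]).degree < (X ^ p : K[X]).degree := by
        rw [degree_X_pow]
        apply lt_of_le_of_lt (degree_add_le _ _)
        simp only [degree_X, max_lt_iff]
        constructor
        · exact_mod_cast hp1
        · exact lt_of_le_of_lt degree_C_le (by exact_mod_cast Nat.zero_lt_of_lt hp1)
      have : (X ^ p - X - C c : K[X]).degree = p := by
        rw [sub_sub, degree_sub_eq_left_of_degree_lt h1, degree_X_pow]
      rw [this]
      exact_mod_cast (by omega : p ≠ 0)
    obtain ⟨α, hα⟩ := IsAlgClosed.exists_root _ hdeg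
    refine ⟨α, fun lam => ?_⟩
    have hroot : eval (α + f lam) (X ^ p - X - C c : K[X]) = 0 := by
      simp only [eval_sub, eval_pow, eval_X, eval_C]
      have h1 : (α + f lam) ^ p = α ^ p + f lam := by
        rw [add_pow_char, ← map_pow, ZMod.pow_card]
      have h2 : α ^ p - α - c = 0 := by
        have := hα; simp only [IsRoot, eval_sub, eval_pow, eval_X, eval_C] at this; exact this
      rw [h1]; linear_combination h2
    obtain ⟨q, hq⟩ := hdvd
    have : eval (α + f lam) (X ^ n - 1 : K[X]) = 0 := by
      rw [hq, eval_mul, hroot, zero_mul]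
    simpa [sub_eq_zero] using this
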